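/- Let P be a countable preorder identified with a subset of ℕ, and define g : P → Pfin(ℕ) by g(p) = {q ≤ p (as naturals) : p ≤_P q}. For an unbounded filter F on P, let ĝ(F) = ⋃_{p∈F} g(p) ∈ 𝒫(ℕ). Then ĝ is injective on unbounded filters, and F can be recovered as F = {p ∈ P : p ∈ ĝ(F)}. -/
import Mathlib


/-- `F` is upward closed in `P` with respect to the relation `le`. -/
def UpClosedOn {α : Type*} (le : α → α → Prop) (P F : Set α) : Prop :=
  ∀ p ∈ F, ∀ q ∈ P, le p q → q ∈ F

/-- `F` is a filter on the preordered set `P` (upward closed and downward directed). -/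
def IsFilterOn {α : Type*} (le : α → α → Prop) (P F : Set α) : Prop :=
  F ⊆ P ∧ UpClosedOn le P F ∧ ∀ p ∈ F, ∀ q ∈ F, ∃ r ∈ F, le r p ∧ le r q

/-- `F` is unbounded: no element of `P` is strictly below every element of `F`. -/
def UnboundedOn {α : Type*} (le : α → α → Prop) (P F : Set α) : Prop :=
  ¬ ∃ r ∈ P, ∀ p ∈ F, le r p ∧ ¬ le p r

/-- `F` is non-principal: every element of `F` has a strictly smaller element in `F`. -/
def NonPrincipalOn {α : Type*} (le : α → α → Prop) (F : Set α) : Prop :=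
  ∀ p ∈ F, ∃ q ∈ F, le q p ∧ ¬ le p q

theorem stmt14 (le : ℕ → ℕ → Prop) (hrefl : ∀ p, le p p)
    (htrans : ∀ p q r, le p q → le q r → le p r) (P : Set ℕ)
    -- P is handy: every unbounded filter is non-principal
    (hhandy : ∀ F, IsFilterOn le P F → UnboundedOn le P F → NonPrincipalOn le F) :
    -- ĝ(F) = ⋃_{p ∈ F} g(p), where g(p) = {q ≤ p (as naturals) : p ≤_P q}
    let ghat : Set ℕ → Set ℕ := fun F => {q | q ∈ P ∧ ∃ p ∈ F, q ≤ p ∧ le p q}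
    Set.InjOn ghat {F | IsFilterOn le P F ∧ UnboundedOn le P F} ∧
    ∀ F, IsFilterOn le P F → UnboundedOn le P F → F = {p ∈ P | p ∈ ghat F} := by
  intro ghat
  have recover : ∀ F, IsFilterOn le P F → UnboundedOn le P F →
      F = {p ∈ P | p ∈ ghat F} := by
    intro F hF hub
    ext p
    constructor
    · intro hp
      refine ⟨hF.1 hp, hF.1 hp, ?_⟩
      -- need ∃ q ∈ F, p ≤ q ∧ le q p
      have hnp := hhandy F hF hub
      choose next hnF hnle hnlt using hnp
      -- build a strictly descending sequence below p
      let seq : ℕ → {x : ℕ // x ∈ F ∧ le x p} := fun n =>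
        Nat.rec ⟨p, hp, hrefl p⟩
          (fun _ s => ⟨next s.1 s.2.1, hnF s.1 s.2.1,
            htrans _ _ _ (hnle s.1 s.2.1) s.2.2⟩) n
      have hstep : ∀ n, le (seq (n+1)).1 (seq n).1 ∧ ¬ le (seq n).1 (seq (n+1)).1 :=
        fun n => ⟨hnle _ _, hnlt _ _⟩
      have hchain : ∀ n m, n ≤ m → le (seq m).1 (seq n).1 := by
        intro n m hnm
        induction m with
        | zero => cases Nat.le_zero.mp hnm; exact hrefl _
        | succ k ih =>
          rcases Nat.lt_or_ge n (k+1) with h | h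
          · exact htrans _ _ _ (hstep k).1 (ih (Nat.lt_succ_iff.mp h))
          · have : n = k + 1 := le_antisymm hnm h
            subst this; exact hrefl _
      have hinj : Function.Injective (fun n => (seq n).1) := by
        intro i j hij
        by_contra hne
        wlog hlt : i < j generalizing i j
        · exact this hij.symm (Ne.symm hne) (lt_of_le_of_ne (not_lt.mp hlt) (Ne.symm hne))
        · have h1 : le (seq j).1 (seq (i+1)).1 := hchain (i+1) j hlt
          have h2 : le (seq i).1 (seq (i+1)).1 := by
            simp only at hij; rw [hij]; exact h1
          exact (hstep i).2 h2
      have hinf : (Set.range fun n => (seq n).1).Infinite :=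
        Set.infinite_range_of_injective hinj
      obtain ⟨b, ⟨n, hn⟩, hb⟩ := hinf.exists_gt p
      simp only at hn
      exact ⟨(seq n).1, (seq n).2.1, by omega, (seq n).2.2⟩
    · rintro ⟨hpP, _, q, hqF, _, hle⟩
      exact hF.2.1 q hqF p hpP hle
  refine ⟨?_, recover⟩
  intro F1 h1 F2 h2 heq
  rw [recover F1 h1.1 h1.2, recover F2 h2.1 h2.2, heq]
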